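/- Let F = {f_i} be a J-frame for H with synthesis operator T. The following are equivalent: (1) F is a Parseval J-frame, i.e. TT⁺ = I; (2) T⁺ is a J-isometry ([T⁺x, T⁺y] = [x,y] for all x,y ∈ H); (3) T⁺T is the J-selfadjoint projection onto N(T)^{[⊥]}. -/

import Mathlib

noncomputable section

open scoped Classical

open Function

/-- The indefinite inner product `[x,y] = ⟨Jx, y⟩` induced by an operator `J`. -/
def kre {E : Type*} [NormedAddCommGroup E] [InnerProductSpace ℂ E]
    (J : E →L[ℂ] E) (x y : E) : ℂ := @inner ℂ _ _ (J x) y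

/-- `J` is a fundamental symmetry: a selfadjoint unitary (involutive) operator. -/
def IsFundSym {E : Type*} [NormedAddCommGroup E] [InnerProductSpace ℂ E] [CompleteSpace E]
    (J : E →L[ℂ] E) : Prop :=
  IsSelfAdjoint J ∧ J.comp J = ContinuousLinearMap.id ℂ E

/-- The J-orthogonal companion of a subspace. -/
def JorthCompanion {E : Type*} [NormedAddCommGroup E] [InnerProductSpace ℂ E]
    (J : E →L[ℂ] E) (S : Submodule ℂ E) : Submodule ℂ E where
  carrier := {x | ∀ s ∈ S, kre J x s = 0}
  zero_mem' := by intro s hs; simp [kre]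
  add_mem' := by
    intro a b ha hb s hs
    have h1 := ha s hs
    have h2 := hb s hs
    simp only [kre, map_add, inner_add_left] at h1 h2 ⊢
    rw [h1, h2, add_zero]
  smul_mem' := by
    intro c x hx s hs
    have h1 := hx s hs
    simp only [kre, map_smul, inner_smul_left] at h1 ⊢
    rw [h1, mul_zero]

/-- Uniformly J-positive subspace. -/
def UnifJPos {E : Type*} [NormedAddCommGroup E] [InnerProductSpace ℂ E]
    (J : E →L[ℂ] E) (S : Submodule ℂ E) : Prop :=
  ∃ α : ℝ, 0 < α ∧ ∀ x ∈ S, α * ‖x‖ ^ 2 ≤ (kre J x x).re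

/-- Uniformly J-negative subspace. -/
def UnifJNeg {E : Type*} [NormedAddCommGroup E] [InnerProductSpace ℂ E]
    (J : E →L[ℂ] E) (S : Submodule ℂ E) : Prop :=
  ∃ α : ℝ, 0 < α ∧ ∀ x ∈ S, (kre J x x).re ≤ -(α * ‖x‖ ^ 2)

/-- Maximal uniformly J-positive subspace. -/
def MaxUnifJPos {E : Type*} [NormedAddCommGroup E] [InnerProductSpace ℂ E]
    (J : E →L[ℂ] E) (S : Submodule ℂ E) : Prop :=
  UnifJPos J S ∧ ∀ S' : Submodule ℂ E, UnifJPos J S' → S ≤ S' → S' = S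

/-- Maximal uniformly J-negative subspace. -/
def MaxUnifJNeg {E : Type*} [NormedAddCommGroup E] [InnerProductSpace ℂ E]
    (J : E →L[ℂ] E) (S : Submodule ℂ E) : Prop :=
  UnifJNeg J S ∧ ∀ S' : Submodule ℂ E, UnifJNeg J S' → S ≤ S' → S' = S

/-- J-selfadjoint operator (with respect to the indefinite inner product of `J`). -/
def IsJSelfAdj {E : Type*} [NormedAddCommGroup E] [InnerProductSpace ℂ E]
    (J : E →L[ℂ] E) (A : E →L[ℂ] E) : Prop :=
  ∀ x y : E, kre J (A x) y = kre J x (A y)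

/-- The J-order: `A ≤_J B` iff `B - A` is J-positive. -/
def JLe {E : Type*} [NormedAddCommGroup E] [InnerProductSpace ℂ E]
    (J : E →L[ℂ] E) (A B : E →L[ℂ] E) : Prop :=
  ∀ x : E, 0 ≤ (kre J (B x - A x) x).re ∧ (kre J (B x - A x) x).im = 0

/-- The subspace of `ℓ²(I)` supported on a subset (given by a predicate) of `I`. -/
def suppSub {I : Type*} (A : I → Prop) : Submodule ℂ (lp (fun _ : I => ℂ) 2) where
  carrier := {x | ∀ i, ¬ A i → x i = 0}
  zero_mem' := by intro i _; rfl
  add_mem' := by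
    intro a b ha hb i hi
    have : (↑(a + b) : ∀ i, ℂ) i = a i + b i := by
      rw [lp.coeFn_add]; rfl
    simp [this, ha i hi, hb i hi]
  smul_mem' := by
    intro c x hx i hi
    have : (↑(c • x) : ∀ i, ℂ) i = c • x i := by
      rw [lp.coeFn_smul]; rfl
    simp [this, hx i hi]

variable {H : Type*} [NormedAddCommGroup H] [InnerProductSpace ℂ H] [CompleteSpace H]
variable {I : Type*} [DecidableEq I]

/-- `i` is a "positive index" for the family `f` w.r.t. `J`: `[f i, f i] ≥ 0`. -/
def posIdx {H : Type*} [NormedAddCommGroup H] [InnerProductSpace ℂ H]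
    (J : H →L[ℂ] H) (f : I → H) (i : I) : Prop := 0 ≤ (kre J (f i) (f i)).re

/-- The sign `σ_i = sgn [f i, f i]` (as a complex scalar, `+1` on `I₊` and `-1` on `I₋`). -/
def sgnv {H : Type*} [NormedAddCommGroup H] [InnerProductSpace ℂ H]
    (J : H →L[ℂ] H) (f : I → H) (i : I) : ℂ := if posIdx J f i then 1 else -1

/-- Closure of the span of the vectors of the family `h` with positive indices (signs taken
from the family `f`). -/
def posSpan {H : Type*} [NormedAddCommGroup H] [InnerProductSpace ℂ H]
    (J : H →L[ℂ] H) (f h : I → H) : Submodule ℂ H :=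
  (Submodule.span ℂ {x | ∃ i, posIdx J f i ∧ h i = x}).topologicalClosure

/-- Closure of the span of the vectors of the family `h` with negative indices. -/
def negSpan {H : Type*} [NormedAddCommGroup H] [InnerProductSpace ℂ H]
    (J : H →L[ℂ] H) (f h : I → H) : Submodule ℂ H :=
  (Submodule.span ℂ {x | ∃ i, ¬ posIdx J f i ∧ h i = x}).topologicalClosure

/-- A Bessel family in a Hilbert space. -/
def IsBessel {H : Type*} [NormedAddCommGroup H] [InnerProductSpace ℂ H]
    (g : I → H) : Prop :=
  ∃ β : ℝ, ∀ (x : H) (s : Finset I),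
    ∑ i ∈ s, ‖@inner ℂ _ _ (g i) x‖ ^ 2 ≤ β * ‖x‖ ^ 2

/-- `g` is a dual family for `f`: the signs coincide and the two indefinite
reconstruction formulas hold. -/
def IsDualFamily {H : Type*} [NormedAddCommGroup H] [InnerProductSpace ℂ H]
    (J : H →L[ℂ] H) (f g : I → H) : Prop :=
  (∀ i, Real.sign ((kre J (g i) (g i)).re) = Real.sign ((kre J (f i) (f i)).re)) ∧
  (∀ x : H, HasSum (fun i => (sgnv J f i * kre J x (f i)) • g i) x) ∧
  (∀ x : H, HasSum (fun i => (sgnv J f i * kre J x (g i)) • f i) x)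


/-- TFAE: (1) `TT⁺ = I` (Parseval J-frame); (2) `T⁺` is a J-isometry;
(3) `T⁺T` is the J-selfadjoint projection onto `N(T)^[⊥]`. -/
theorem parseval_jframe_tfae
    (J : H →L[ℂ] H) (hJ : IsFundSym J) (f : I → H)
    (T : lp (fun _ : I => ℂ) 2 →L[ℂ] H)
    (hT : ∀ i, T (lp.single 2 i (1:ℂ)) = f i)
    (hTsurj : Function.Surjective T)
    (Pp Pm : lp (fun _ : I => ℂ) 2 →L[ℂ] lp (fun _ : I => ℂ) 2)
    (hPp : ∀ (x : lp (fun _ : I => ℂ) 2) (i : I), Pp x i = if posIdx J f i then x i else 0)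
    (hPm : ∀ (x : lp (fun _ : I => ℂ) 2) (i : I), Pm x i = if posIdx J f i then 0 else x i)
    (hJF : MaxUnifJPos J (LinearMap.range (T.comp Pp).toLinearMap) ∧
      MaxUnifJNeg J (LinearMap.range (T.comp Pm).toLinearMap))
    (Tp : H →L[ℂ] lp (fun _ : I => ℂ) 2)
    (hTp : ∀ (x : lp (fun _ : I => ℂ) 2) (y : H), kre J (T x) y = kre (Pp - Pm) x (Tp y)) :
    (T.comp Tp = ContinuousLinearMap.id ℂ H ↔
        ∀ x y : H, kre (Pp - Pm) (Tp x) (Tp y) = kre J x y) ∧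
      (T.comp Tp = ContinuousLinearMap.id ℂ H ↔
        ((Tp.comp T).comp (Tp.comp T) = Tp.comp T ∧
          IsJSelfAdj (Pp - Pm) (Tp.comp T) ∧
          LinearMap.range (Tp.comp T).toLinearMap =
            JorthCompanion (Pp - Pm) (LinearMap.ker T.toLinearMap))) := by

  classical
  obtain ⟨hJsa, hJinv⟩ := hJ
  set J2 : lp (fun _ : I => ℂ) 2 →L[ℂ] lp (fun _ : I => ℂ) 2 := Pp - Pm with hJ2def
  -- componentwise action of J2
  have hJ2app : ∀ (x : lp (fun _ : I => ℂ) 2) (i : I),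
      (J2 x) i = if posIdx J f i then x i else -(x i) := by
    intro x i
    have h1 : (J2 x : ∀ i, ℂ) i = (Pp x : ∀ i, ℂ) i - (Pm x : ∀ i, ℂ) i := by
      simp [hJ2def]
    rw [h1, hPp, hPm]
    by_cases h : posIdx J f i <;> simp [h]
  -- J2 selfadjoint w.r.t. Hilbert inner product
  have hJ2sa : ∀ a b : lp (fun _ : I => ℂ) 2,
      (inner ℂ (J2 a) b : ℂ) = inner ℂ a (J2 b) := by
    intro a b
    rw [lp.inner_eq_tsum, lp.inner_eq_tsum]
    congr 1
    funext i
    rw [hJ2app, hJ2app]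
    by_cases h : posIdx J f i <;> simp [h, inner_neg_left, inner_neg_right]
  -- J2 injective
  have hJ2inj : ∀ x : lp (fun _ : I => ℂ) 2, J2 x = 0 → x = 0 := by
    intro x hx
    apply lp.ext
    funext i
    have h0 : (J2 x : ∀ i, ℂ) i = 0 := by rw [hx]; rfl
    rw [hJ2app] at h0
    by_cases h : posIdx J f i
    · simpa [h] using h0
    · simp only [h, if_false, neg_eq_zero] at h0
      simpa using h0
  -- conjugate symmetry of kre
  have hkreJ2 : ∀ a b, kre J2 a b = starRingEnd ℂ (kre J2 b a) := by
    intro a b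
    rw [kre, kre, inner_conj_symm]
    exact hJ2sa a b
  have hkreJ : ∀ a b : H, kre J a b = starRingEnd ℂ (kre J b a) := by
    intro a b
    rw [kre, kre, inner_conj_symm]
    exact hJsa.isSymmetric a b
  -- nondegeneracy of kre J
  have hJnd : ∀ u : H, (∀ y, kre J u y = 0) → u = 0 := by
    intro u hu
    have h1 : J u = 0 := by
      have := hu (J u)
      rw [kre] at this
      exact inner_self_eq_zero.mp this
    have h2 : J (J u) = u := congrFun (congrArg DFunLike.coe hJinv) u
    rw [h1] at h2
    simpa using h2.symm
  -- nondegeneracy of kre J2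
  have hJ2nd : ∀ d : lp (fun _ : I => ℂ) 2, (∀ s, kre J2 d s = 0) → d = 0 := by
    intro d hd
    apply hJ2inj
    have := hd (J2 d)
    rw [kre] at this
    exact inner_self_eq_zero.mp this
  -- the dual adjoint relation
  have hTp' : ∀ (z : H) (w : lp (fun _ : I => ℂ) 2),
      kre J2 (Tp z) w = kre J z (T w) := by
    intro z w
    rw [hkreJ2, hkreJ, hTp]
  -- unconditional J2-selfadjointness of Q = Tp ∘ T
  have hQsa : IsJSelfAdj J2 (Tp.comp T) := by
    intro x y
    show kre J2 (Tp (T x)) y = kre J2 x (Tp (T y))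
    rw [hTp' (T x) y, hTp x (T y)]
  have hid_pt : T.comp Tp = ContinuousLinearMap.id ℂ H → ∀ y, T (Tp y) = y := by
    intro h y
    exact congrFun (congrArg DFunLike.coe h) y
  -- (1) → (2)
  have h12 : T.comp Tp = ContinuousLinearMap.id ℂ H →
      ∀ x y : H, kre J2 (Tp x) (Tp y) = kre J x y := by
    intro h x y
    rw [hTp' x (Tp y), hid_pt h y]
  -- (2) → (1)
  have h21 : (∀ x y : H, kre J2 (Tp x) (Tp y) = kre J x y) →
      T.comp Tp = ContinuousLinearMap.id ℂ H := by
    intro h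
    refine ContinuousLinearMap.ext fun y => ?_
    show T (Tp y) = y
    have hz : T (Tp y) - y = 0 := by
      apply hJnd
      intro w
      have hs : kre J (T (Tp y) - y) w = kre J (T (Tp y)) w - kre J y w := by
        simp [kre, inner_sub_left]
      rw [hs, hTp (Tp y) w, h y w, sub_self]
    exact sub_eq_zero.mp hz
  -- (1) → (3)
  have h13 : T.comp Tp = ContinuousLinearMap.id ℂ H →
      ((Tp.comp T).comp (Tp.comp T) = Tp.comp T ∧
        IsJSelfAdj J2 (Tp.comp T) ∧
        LinearMap.range (Tp.comp T).toLinearMap = JorthCompanion J2 (LinearMap.ker T.toLinearMap)) := by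
    intro h
    refine ⟨?_, hQsa, ?_⟩
    · refine ContinuousLinearMap.ext fun x => ?_
      show Tp (T (Tp (T x))) = Tp (T x)
      rw [hid_pt h (T x)]
    · apply le_antisymm
      · rintro x ⟨z, rfl⟩
        intro s hs
        have hsk : T s = 0 := hs
        show kre J2 (Tp (T z)) s = 0
        rw [hTp' (T z) s, hsk, kre]
        simp
      · intro x hx
        have hd : x - Tp (T x) = 0 := by
          apply hJ2nd
          intro s
          have hdecomp : s = Tp (T s) + (s - Tp (T s)) := by abel
          have hker : T (s - Tp (T s)) = 0 := by
            rw [map_sub, hid_pt h (T s), sub_self]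
          have hTd : T (x - Tp (T x)) = 0 := by
            rw [map_sub, hid_pt h (T x), sub_self]
          have e1 : kre J2 (x - Tp (T x)) (Tp (T s)) = 0 := by
            rw [hkreJ2, hTp' (T s) (x - Tp (T x)), hTd, kre]
            simp
          have e2 : kre J2 (x - Tp (T x)) (s - Tp (T s)) = 0 := by
            have ea : kre J2 x (s - Tp (T s)) = 0 := hx _ hker
            have eb : kre J2 (Tp (T x)) (s - Tp (T s)) = 0 := by
              rw [hTp' (T x) (s - Tp (T s)), hker, kre]
              simp
            simp only [kre] at ea eb
            simp only [kre, map_sub, inner_sub_left]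
            rw [ea, eb, sub_zero]
          calc kre J2 (x - Tp (T x)) s
              = kre J2 (x - Tp (T x)) (Tp (T s) + (s - Tp (T s))) := by rw [← hdecomp]
            _ = kre J2 (x - Tp (T x)) (Tp (T s)) +
                kre J2 (x - Tp (T x)) (s - Tp (T s)) := by
                simp only [kre, inner_add_right]
            _ = 0 := by rw [e1, e2, add_zero]
        refine ⟨x, ?_⟩
        show Tp (T x) = x
        have := sub_eq_zero.mp hd
        exact this.symm
  -- (3) → (1)
  have h31 : ((Tp.comp T).comp (Tp.comp T) = Tp.comp T ∧
        IsJSelfAdj J2 (Tp.comp T) ∧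
        LinearMap.range (Tp.comp T).toLinearMap = JorthCompanion J2 (LinearMap.ker T.toLinearMap)) →
      T.comp Tp = ContinuousLinearMap.id ℂ H := by
    rintro ⟨hidem, hsa, -⟩
    have hidem' : ∀ z, Tp (T (Tp (T z))) = Tp (T z) := by
      intro z
      exact congrFun (congrArg DFunLike.coe hidem) z
    have hker : ∀ z, Tp (T z) = 0 → T z = 0 := by
      intro z hz
      apply hJnd
      intro y
      obtain ⟨w, rfl⟩ := hTsurj y
      rw [hTp z (T w)]
      have hsw : kre J2 z (Tp (T w)) = kre J2 (Tp (T z)) w := (hsa z w).symm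
      rw [hsw, hz, kre]
      simp
    refine ContinuousLinearMap.ext fun y => ?_
    show T (Tp y) = y
    obtain ⟨w, rfl⟩ := hTsurj y
    have h1 : Tp (T (w - Tp (T w))) = 0 := by
      rw [map_sub, map_sub, hidem' w, sub_self]
    have h2 : T (w - Tp (T w)) = 0 := hker _ h1
    rw [map_sub] at h2
    have h3 : T (Tp (T w)) = T w := (sub_eq_zero.mp h2).symm
    exact h3
  exact ⟨⟨h12, h21⟩, ⟨h13, h31⟩⟩
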